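/- Let β, γ > 0 and let S, I : ℝ → ℝ be differentiable on [0, ∞) with S'(t) = -β·S(t)·I(t) + γ·I(t) and I'(t) = β·S(t)·I(t) - γ·I(t) for all t ≥ 0, S(0) ≥ 0, I(0) > 0, and set N = S(0) + I(0). If N·β > γ (i.e., the basic reproduction number R₀ = Nβ/γ > 1), then I(t) → N - γ/β and S(t) → γ/β as t → ∞. -/

import Mathlib

open Set Filter Real

/-- SIS ODE with mass action: if `R₀ = Nβ/γ > 1` (i.e. `Nβ > γ`), the endemic
equilibrium `(γ/β, N - γ/β)` is globally attractive. -/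
theorem stmt_5 (β γ : ℝ) (hβ : 0 < β) (hγ : 0 < γ) (S I : ℝ → ℝ)
    (hS : ∀ t ∈ Set.Ici (0 : ℝ),
      HasDerivWithinAt S (-β * S t * I t + γ * I t) (Set.Ici 0) t)
    (hI : ∀ t ∈ Set.Ici (0 : ℝ),
      HasDerivWithinAt I (β * S t * I t - γ * I t) (Set.Ici 0) t)
    (hS0 : 0 ≤ S 0) (hI0 : 0 < I 0) (N : ℝ) (hN : N = S 0 + I 0)
    (hR0 : γ < N * β) :
    Filter.Tendsto I Filter.atTop (nhds (N - γ / β)) ∧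
      Filter.Tendsto S Filter.atTop (nhds (γ / β)) := by
  have hβ' : β ≠ 0 := hβ.ne'
  set K : ℝ := N - γ / β with hKdef
  have hKpos : 0 < K := by
    rw [hKdef, sub_pos, div_lt_iff₀ hβ]
    linarith
  have hK0 : K ≠ 0 := hKpos.ne'
  -- continuity of S and I on `Ici 0`
  have hScont : ContinuousOn S (Ici 0) := fun t ht => (hS t ht).continuousWithinAt
  have hIcont : ContinuousOn I (Ici 0) := fun t ht => (hI t ht).continuousWithinAt
  -- Step A : S + I is constant equal to N
  have hsum : ∀ t ∈ Ici (0 : ℝ), S t + I t = N := by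
    intro t ht
    have := constant_of_has_deriv_right_zero (f := fun t => S t + I t) (a := 0) (b := t)
      ((hScont.mono Icc_subset_Ici_self).add (hIcont.mono Icc_subset_Ici_self))
      (fun x hx => by
        have hx0 : x ∈ Ici (0 : ℝ) := hx.1
        have h := ((hS x hx0).add (hI x hx0)).mono (Ici_subset_Ici.2 hx.1)
        convert h using 1
        · rfl
        · ring)
      t (by exact ⟨ht, le_refl t⟩)
    simpa [hN] using this
  -- Step B : I satisfies the logistic ODE
  have hI' : ∀ t ∈ Ici (0 : ℝ), HasDerivWithinAt I (β * I t * (K - I t)) (Ici 0) t := by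
    intro t ht
    have h := hI t ht
    have hs : S t = N - I t := by have := hsum t ht; linarith
    convert h using 1
    rw [hs, hKdef]
    field_simp
    ring
  -- Step C : I stays positive
  have hpos : ∀ t ∈ Ici (0 : ℝ), 0 < I t := by
    intro t ht
    by_contra hle
    push_neg at hle
    -- there is c ∈ [0, t] with I c = 0
    obtain ⟨c, hc, hIc⟩ : ∃ c ∈ Icc (0 : ℝ) t, I c = 0 := by
      have h0 : (0 : ℝ) ∈ Icc (I t) (I 0) := ⟨hle, hI0.le⟩
      have := intermediate_value_Icc' ht (hIcont.mono (Icc_subset_Ici_self)) h0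
      obtain ⟨c, hc, hIc⟩ := this
      exact ⟨c, hc, hIc⟩
    have hcpos : 0 < c := by
      rcases hc.1.lt_or_eq with h | h
      · exact h
      · exact absurd hIc.symm (by rw [← h]; exact hI0.ne)
    -- time-reversed function
    set J : ℝ → ℝ := fun s => I (c - s) with hJdef
    have hJcont : ContinuousOn J (Icc 0 c) := by
      apply hIcont.comp (Continuous.continuousOn (by continuity))
      intro s hs
      simp only [mem_Ici]
      linarith [hs.2]
    -- bound on I on [0, c]
    obtain ⟨M, hM⟩ := (isCompact_Icc (a := (0:ℝ)) (b := c)).exists_bound_of_continuousOn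
      (hIcont.mono Icc_subset_Ici_self)
    have hJ' : ∀ s ∈ Ico (0 : ℝ) c,
        HasDerivWithinAt J (-(β * I (c - s) * (K - I (c - s)))) (Ici s) s := by
      intro s hs
      have hcs : 0 < c - s := by linarith [hs.2]
      have h1 : HasDerivAt I (β * I (c - s) * (K - I (c - s))) (c - s) :=
        (hI' (c - s) hcs.le).hasDerivAt (Ici_mem_nhds hcs)
      have h2 : HasDerivAt (fun s : ℝ => c - s) (-1) s := by
        simpa using (hasDerivAt_id s).const_sub c
      have := h1.comp s h2
      exact (this.congr_deriv (by ring)).hasDerivWithinAt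
    have hbound : ∀ s ∈ Ico (0 : ℝ) c,
        ‖-(β * I (c - s) * (K - I (c - s)))‖ ≤ (β * (|K| + M)) * ‖J s‖ + 0 := by
      intro s hs
      have hmem : c - s ∈ Icc (0 : ℝ) c := ⟨by linarith [hs.2], by linarith [hs.1]⟩
      have hIM : |I (c - s)| ≤ M := hM _ hmem
      have h1 : |K - I (c - s)| ≤ |K| + M :=
        le_trans (abs_sub _ _) (by linarith)
      have : ‖-(β * I (c - s) * (K - I (c - s)))‖
          = β * |I (c - s)| * |K - I (c - s)| := by
        rw [norm_neg, Real.norm_eq_abs, abs_mul, abs_mul, abs_of_pos hβ]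
      rw [this, add_zero]
      have hJs : ‖J s‖ = |I (c - s)| := by simp [hJdef, Real.norm_eq_abs]
      rw [hJs]
      have hInn : (0:ℝ) ≤ |I (c - s)| := abs_nonneg _
      calc β * |I (c - s)| * |K - I (c - s)| ≤ β * |I (c - s)| * (|K| + M) := by
            apply mul_le_mul_of_nonneg_left h1 (by positivity)
        _ = β * (|K| + M) * |I (c - s)| := by ring
    have hgron := norm_le_gronwallBound_of_norm_deriv_right_le (a := 0) (b := c) (δ := 0)
      hJcont hJ' (by simp [hJdef, hIc]) hbound c ⟨hcpos.le, le_refl c⟩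
    rw [gronwallBound_ε0_δ0] at hgron
    have : J c = I 0 := by simp [hJdef]
    rw [this] at hgron
    have := abs_nonneg (I 0)
    simp only [Real.norm_eq_abs] at hgron
    have : I 0 ≤ 0 := le_trans (le_abs_self _) hgron
    linarith
  -- Step D : u = 1/I solves a linear ODE, compare with explicit solution
  set w : ℝ → ℝ := fun t => K⁻¹ + ((I 0)⁻¹ - K⁻¹) * Real.exp (-(β * K) * t) with hwdef
  have hueqw : ∀ t ∈ Ici (0 : ℝ), (I t)⁻¹ = w t := by
    intro T hT
    have hLip : ∀ t : ℝ, LipschitzWith ⟨β * K, (mul_pos hβ hKpos).le⟩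
        (fun x : ℝ => β - β * K * x) := by
      intro t
      refine lipschitzWith_iff_dist_le_mul.2 ?_
      intro x y
      show dist _ _ ≤ β * K * dist x y
      have h : (β - β * K * x) - (β - β * K * y) = -(β * K * (x - y)) := by ring
      rw [Real.dist_eq, Real.dist_eq, h, abs_neg, abs_mul,
        abs_of_nonneg (mul_pos hβ hKpos).le]
    have hucont : ContinuousOn (fun t => (I t)⁻¹) (Icc 0 T) :=
      ContinuousOn.inv₀ (hIcont.mono Icc_subset_Ici_self)
        (fun t ht => (hpos t ht.1).ne')
    have hu' : ∀ t ∈ Ico (0 : ℝ) T,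
        HasDerivWithinAt (fun t => (I t)⁻¹) (β - β * K * (I t)⁻¹) (Ici t) t := by
      intro t ht
      have hIt : I t ≠ 0 := (hpos t ht.1).ne'
      have h := ((hI' t ht.1).mono (Ici_subset_Ici.2 ht.1)).inv hIt
      refine h.congr_deriv ?_
      field_simp
      ring
    have hwcont : ContinuousOn w (Icc 0 T) := by
      apply Continuous.continuousOn
      continuity
    have hw' : ∀ t ∈ Ico (0 : ℝ) T,
        HasDerivWithinAt w (β - β * K * w t) (Ici t) t := by
      intro t ht
      have hlin : HasDerivAt (fun t : ℝ => -(β * K) * t) (-(β * K)) t := by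
        simpa using (hasDerivAt_id t).const_mul (-(β * K))
      have h1 : HasDerivAt w (((I 0)⁻¹ - K⁻¹) * (Real.exp (-(β * K) * t) * -(β * K))) t :=
        (hlin.exp.const_mul _).const_add _
      have h2 : ((I 0)⁻¹ - K⁻¹) * (Real.exp (-(β * K) * t) * -(β * K)) = β - β * K * w t := by
        simp only [hwdef]
        field_simp
        ring
      rw [h2] at h1
      exact h1.hasDerivWithinAt
    have h0 : (I 0)⁻¹ = w 0 := by simp [hwdef]
    exact ODE_solution_unique hLip hucont hu' hwcont hw' h0 ⟨hT, le_refl T⟩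
  -- limits
  have hwlim : Tendsto w atTop (nhds K⁻¹) := by
    have hexp : Tendsto (fun t : ℝ => Real.exp (-(β * K) * t)) atTop (nhds 0) := by
      apply Real.tendsto_exp_atBot.comp
      apply Tendsto.const_mul_atTop_of_neg (by simpa using neg_neg_iff_pos.2 (mul_pos hβ hKpos))
      exact tendsto_id
    have h2 : Tendsto (fun t : ℝ => K⁻¹ + ((I 0)⁻¹ - K⁻¹) * Real.exp (-(β * K) * t))
        atTop (nhds (K⁻¹ + ((I 0)⁻¹ - K⁻¹) * 0)) :=
      tendsto_const_nhds.add (tendsto_const_nhds.mul hexp)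
    simpa [hwdef] using h2
  have hIlim : Tendsto I atTop (nhds K) := by
    have h1 : Tendsto (fun t => (w t)⁻¹) atTop (nhds K) := by
      have := hwlim.inv₀ (inv_ne_zero hK0)
      simpa using this
    apply h1.congr'
    filter_upwards [eventually_ge_atTop (0 : ℝ)] with t ht
    have h := hueqw t ht
    rw [← h, inv_inv]
  refine ⟨hIlim, ?_⟩
  have hSlim : Tendsto (fun t => N - I t) atTop (nhds (N - K)) :=
    tendsto_const_nhds.sub hIlim
  have hNK : N - K = γ / β := by rw [hKdef]; ring
  rw [hNK] at hSlim
  apply hSlim.congr'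
  filter_upwards [eventually_ge_atTop (0 : ℝ)] with t ht
  have := hsum t ht
  linarith
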